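/- Let η > 0 and r ≥ η. There exists a constant C = C(η, r) > 0 such that for every real symmetric 6×6 matrix A₀ with xᵀA₀x ≥ η|x|² for all x ∈ ℝ⁶ and with operator norm at most r, the 8×6 matrix μ̂ whose first six rows are the six rows of A₃^co and whose last two rows are the third and the sixth row of A₀ satisfies |v| ≤ C |μ̂ v| for all v ∈ ℝ⁶. In particular μ̂ is injective, so in the half-space Maxwell problem the full gradient component ∂₃u can be recovered from A₃^co∂₃u together with the two rows (A₀∂₃u)₃ and (A₀∂₃u)₆ arising from the divergence structure. -/

import Mathlib

open Matrix

noncomputable section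

/-- The matrix `J₃`. -/
def J3 : Matrix (Fin 3) (Fin 3) ℝ := !![0,-1,0; 1,0,0; 0,0,0]

/-- The block matrix `A₃^co = [[0, −J₃],[J₃, 0]]`. -/
def A3co : Matrix (Fin 6) (Fin 6) ℝ :=
  Matrix.reindex finSumFinEquiv finSumFinEquiv
    (Matrix.fromBlocks 0 (-J3) J3 0)

/-- The Euclidean norm on `ℝⁿ`. -/
def euclNorm {n : ℕ} (v : Fin n → ℝ) : ℝ := Real.sqrt (∑ i, v i ^ 2)

/-- The `8 × 6` matrix `μ̂` whose first six rows are the rows of `A₃^co` and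
whose last two rows are the third and sixth row of `A₀`. -/
def muhat (A0 : Matrix (Fin 6) (Fin 6) ℝ) : Matrix (Fin 8) (Fin 6) ℝ :=
  Matrix.of fun i j =>
    if h : (i : ℕ) < 6 then A3co ⟨i, h⟩ j
    else if (i : ℕ) = 6 then A0 2 j else A0 5 j

lemma A3co_eq : A3co = !![0,0,0,0,1,0; 0,0,0,-1,0,0; 0,0,0,0,0,0; 0,-1,0,0,0,0; 1,0,0,0,0,0; 0,0,0,0,0,0] := by
  ext i j
  fin_cases i <;> fin_cases j <;>
    norm_num [A3co, J3, Matrix.reindex_apply, Matrix.submatrix_apply, Matrix.fromBlocks,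
      finSumFinEquiv, Fin.addCases, Fin.castLT, Fin.subNat]

lemma mv_eq (A0 : Matrix (Fin 6) (Fin 6) ℝ) (v : Fin 6 → ℝ) :
    (muhat A0).mulVec v = ![v 4, -(v 3), 0, -(v 1), v 0, 0, A0.mulVec v 2, A0.mulVec v 5] := by
  ext i
  fin_cases i <;>
    norm_num [muhat, mulVec, dotProduct, Fin.sum_univ_succ, A3co_eq] <;>
    (congr 1 <;> decide)

lemma cs2 (x1 x2 y1 y2 : ℝ) :
    x1 * y1 + x2 * y2 ≤ Real.sqrt (x1 ^ 2 + x2 ^ 2) * Real.sqrt (y1 ^ 2 + y2 ^ 2) := by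
  simpa [Fin.sum_univ_two] using
    Real.sum_mul_le_sqrt_mul_sqrt Finset.univ (![x1, x2]) (![y1, y2])

lemma cs6 (f g : Fin 6 → ℝ) : f ⬝ᵥ g ≤ euclNorm f * euclNorm g := by
  simpa [dotProduct, euclNorm] using Real.sum_mul_le_sqrt_mul_sqrt Finset.univ f g

lemma enorm_nonneg {n : ℕ} (v : Fin n → ℝ) : 0 ≤ euclNorm v := Real.sqrt_nonneg _

@[simp] lemma vec8_five {α : Type*} (a0 a1 a2 a3 a4 a5 a6 a7 : α) :
    ![a0,a1,a2,a3,a4,a5,a6,a7] 5 = a5 := rfl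
@[simp] lemma vec8_six {α : Type*} (a0 a1 a2 a3 a4 a5 a6 a7 : α) :
    ![a0,a1,a2,a3,a4,a5,a6,a7] 6 = a6 := rfl
@[simp] lemma vec8_seven {α : Type*} (a0 a1 a2 a3 a4 a5 a6 a7 : α) :
    ![a0,a1,a2,a3,a4,a5,a6,a7] 7 = a7 := rfl
@[simp] lemma vec6_five {α : Type*} (a0 a1 a2 a3 a4 a5 : α) :
    ![a0,a1,a2,a3,a4,a5] 5 = a5 := rfl

theorem muhat_lower_bound (η r : ℝ) (hη : 0 < η) (hr : η ≤ r) :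
    ∃ C : ℝ, 0 < C ∧
      ∀ A0 : Matrix (Fin 6) (Fin 6) ℝ, A0.IsSymm →
        (∀ x : Fin 6 → ℝ, η * ∑ i, x i ^ 2 ≤ x ⬝ᵥ A0.mulVec x) →
        (∀ x : Fin 6 → ℝ, euclNorm (A0.mulVec x) ≤ r * euclNorm x) →
        (∀ v : Fin 6 → ℝ, euclNorm v ≤ C * euclNorm ((muhat A0).mulVec v)) ∧
        Function.Injective (muhat A0).mulVec := by
  have hr0 : (0:ℝ) < r := lt_of_lt_of_le hη hr
  refine ⟨(1 + r) / η + 1, by positivity, ?_⟩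
  intro A0 _hsym hpos hop
  have key : ∀ v : Fin 6 → ℝ,
      euclNorm v ≤ ((1 + r) / η + 1) * euclNorm ((muhat A0).mulVec v) := by
    intro v
    obtain ⟨m, hmdef⟩ : ∃ m, m = euclNorm ((muhat A0).mulVec v) := ⟨_, rfl⟩
    rw [← hmdef]
    have hmnn : 0 ≤ m := hmdef ▸ enorm_nonneg _
    have hm : m = Real.sqrt (v 0 ^ 2 + v 1 ^ 2 + v 3 ^ 2 + v 4 ^ 2 +
        (A0.mulVec v 2) ^ 2 + (A0.mulVec v 5) ^ 2) := by
      rw [hmdef, euclNorm, mv_eq]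
      congr 1
      simp [Fin.sum_univ_eight]
      ring
    obtain ⟨s, hsdef⟩ : ∃ s, s = Real.sqrt (v 2 ^ 2 + v 5 ^ 2) := ⟨_, rfl⟩
    obtain ⟨t, htdef⟩ : ∃ t, t = Real.sqrt (v 0 ^ 2 + v 1 ^ 2 + v 3 ^ 2 + v 4 ^ 2) := ⟨_, rfl⟩
    have hsnn : 0 ≤ s := hsdef ▸ Real.sqrt_nonneg _
    have htnn : 0 ≤ t := htdef ▸ Real.sqrt_nonneg _
    have hs2 : s ^ 2 = v 2 ^ 2 + v 5 ^ 2 := hsdef ▸ Real.sq_sqrt (by positivity)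
    have ht2 : t ^ 2 = v 0 ^ 2 + v 1 ^ 2 + v 3 ^ 2 + v 4 ^ 2 := htdef ▸ Real.sq_sqrt (by positivity)
    have htm : t ≤ m := by
      rw [htdef, hm]
      apply Real.sqrt_le_sqrt
      linarith [sq_nonneg (A0.mulVec v 2), sq_nonneg (A0.mulVec v 5)]
    have habm : Real.sqrt ((A0.mulVec v 2) ^ 2 + (A0.mulVec v 5) ^ 2) ≤ m := by
      rw [hm]
      apply Real.sqrt_le_sqrt
      linarith [sq_nonneg (v 0), sq_nonneg (v 1), sq_nonneg (v 3), sq_nonneg (v 4)]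
    -- the two auxiliary vectors
    have hvuw : v = ![0, 0, v 2, 0, 0, v 5] + ![v 0, v 1, 0, v 3, v 4, 0] := by
      funext i; fin_cases i <;> simp
    have henu : euclNorm ![0, 0, v 2, 0, 0, v 5] = s := by
      rw [euclNorm, hsdef]; congr 1; simp [Fin.sum_univ_six]
    have henw : euclNorm ![v 0, v 1, 0, v 3, v 4, 0] = t := by
      rw [euclNorm, htdef]; congr 1; simp [Fin.sum_univ_six]
    have h1 : η * (v 2 ^ 2 + v 5 ^ 2) ≤
        ![0, 0, v 2, 0, 0, v 5] ⬝ᵥ A0.mulVec ![0, 0, v 2, 0, 0, v 5] := by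
      have h := hpos ![0, 0, v 2, 0, 0, v 5]
      have hsum : ∑ i, (![0, 0, v 2, 0, 0, v 5] : Fin 6 → ℝ) i ^ 2 = v 2 ^ 2 + v 5 ^ 2 := by
        simp [Fin.sum_univ_six]
      rwa [hsum] at h
    have hsplit : ![0, 0, v 2, 0, 0, v 5] ⬝ᵥ A0.mulVec ![0, 0, v 2, 0, 0, v 5]
        = ![0, 0, v 2, 0, 0, v 5] ⬝ᵥ A0.mulVec v
          - ![0, 0, v 2, 0, 0, v 5] ⬝ᵥ A0.mulVec ![v 0, v 1, 0, v 3, v 4, 0] := by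
      have hsum : A0.mulVec v = A0.mulVec ![0, 0, v 2, 0, 0, v 5]
          + A0.mulVec ![v 0, v 1, 0, v 3, v 4, 0] := by
        conv_lhs => rw [hvuw]
        rw [Matrix.mulVec_add]
      rw [hsum, dotProduct_add]
      ring
    have hdot_uv : ![0, 0, v 2, 0, 0, v 5] ⬝ᵥ A0.mulVec v
        = v 2 * A0.mulVec v 2 + v 5 * A0.mulVec v 5 := by
      simp [dotProduct, Fin.sum_univ_six]
    have h2 : v 2 * A0.mulVec v 2 + v 5 * A0.mulVec v 5 ≤ s * m := by
      calc v 2 * A0.mulVec v 2 + v 5 * A0.mulVec v 5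
          ≤ s * Real.sqrt ((A0.mulVec v 2) ^ 2 + (A0.mulVec v 5) ^ 2) := by
            rw [hsdef]; exact cs2 _ _ _ _
        _ ≤ s * m := by
            exact mul_le_mul_of_nonneg_left habm hsnn
    have h3 : -(![0, 0, v 2, 0, 0, v 5] ⬝ᵥ A0.mulVec ![v 0, v 1, 0, v 3, v 4, 0]) ≤ s * (r * m) := by
      have hcs := cs6 ![0, 0, v 2, 0, 0, v 5] (-(A0.mulVec ![v 0, v 1, 0, v 3, v 4, 0]))
      have hneg : euclNorm (-(A0.mulVec ![v 0, v 1, 0, v 3, v 4, 0]))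
          = euclNorm (A0.mulVec ![v 0, v 1, 0, v 3, v 4, 0]) := by
        simp [euclNorm]
      rw [dotProduct_neg, hneg, henu] at hcs
      have hAw : euclNorm (A0.mulVec ![v 0, v 1, 0, v 3, v 4, 0]) ≤ r * t := by
        have := hop ![v 0, v 1, 0, v 3, v 4, 0]
        rwa [henw] at this
      calc -(![0, 0, v 2, 0, 0, v 5] ⬝ᵥ A0.mulVec ![v 0, v 1, 0, v 3, v 4, 0])
          ≤ s * euclNorm (A0.mulVec ![v 0, v 1, 0, v 3, v 4, 0]) := hcs
        _ ≤ s * (r * t) := mul_le_mul_of_nonneg_left hAw hsnn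
        _ ≤ s * (r * m) := by
            apply mul_le_mul_of_nonneg_left _ hsnn
            exact mul_le_mul_of_nonneg_left htm (le_of_lt hr0)
    have hkey : η * s ^ 2 ≤ s * m + s * (r * m) := by
      rw [hs2]
      calc η * (v 2 ^ 2 + v 5 ^ 2)
          ≤ ![0, 0, v 2, 0, 0, v 5] ⬝ᵥ A0.mulVec ![0, 0, v 2, 0, 0, v 5] := h1
        _ = ![0, 0, v 2, 0, 0, v 5] ⬝ᵥ A0.mulVec v
            - ![0, 0, v 2, 0, 0, v 5] ⬝ᵥ A0.mulVec ![v 0, v 1, 0, v 3, v 4, 0] := hsplit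
        _ ≤ s * m + s * (r * m) := by
            rw [hdot_uv]
            have := h2
            have := h3
            linarith
    have hsm : η * s ≤ (1 + r) * m := by
      rcases hsnn.eq_or_lt with h | h
      · rw [← h, mul_zero]
        exact mul_nonneg (by linarith) hmnn
      · have hkey' : (η * s) * s ≤ ((1 + r) * m) * s := by
          calc (η * s) * s = η * s ^ 2 := by ring
            _ ≤ s * m + s * (r * m) := hkey
            _ = ((1 + r) * m) * s := by ring
        exact le_of_mul_le_mul_right hkey' h
    have hst : s ≤ (1 + r) / η * m := by
      rw [div_mul_eq_mul_div, le_div_iff₀ hη]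
      linarith [hsm]
    have hv : euclNorm v ≤ s + t := by
      rw [euclNorm]
      have hsum : ∑ i, v i ^ 2 = s ^ 2 + t ^ 2 := by
        rw [hs2, ht2, Fin.sum_univ_six]; ring
      rw [hsum]
      have h1 : s ^ 2 + t ^ 2 ≤ (s + t) ^ 2 := by
        have h2 : (s + t) ^ 2 = s ^ 2 + t ^ 2 + 2 * (s * t) := by ring
        linarith [mul_nonneg hsnn htnn]
      calc Real.sqrt (s ^ 2 + t ^ 2) ≤ Real.sqrt ((s + t) ^ 2) := Real.sqrt_le_sqrt h1
        _ = s + t := Real.sqrt_sq (by linarith)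
    calc euclNorm v ≤ s + t := hv
      _ ≤ (1 + r) / η * m + m := add_le_add hst htm
      _ = ((1 + r) / η + 1) * m := by ring
  refine ⟨key, ?_⟩
  intro v1 v2 h12
  have h0 : (muhat A0).mulVec (v1 - v2) = 0 := by
    rw [Matrix.mulVec_sub, h12, sub_self]
  have hb := key (v1 - v2)
  have hz : euclNorm ((muhat A0).mulVec (v1 - v2)) = 0 := by rw [h0]; simp [euclNorm]
  rw [hz, mul_zero] at hb
  have he : euclNorm (v1 - v2) = 0 := le_antisymm hb (enorm_nonneg _)
  have hle : ∑ i, (v1 - v2) i ^ 2 ≤ 0 := Real.sqrt_eq_zero'.mp he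
  have hge : 0 ≤ ∑ i, (v1 - v2) i ^ 2 := Finset.sum_nonneg fun i _ => sq_nonneg _
  have hsum0 : ∑ i, (v1 - v2) i ^ 2 = 0 := le_antisymm hle hge
  have hall := (Finset.sum_eq_zero_iff_of_nonneg fun i _ => sq_nonneg ((v1 - v2) i)).mp hsum0
  have : v1 - v2 = 0 := by
    funext i
    exact pow_eq_zero_iff two_ne_zero |>.mp (hall i (Finset.mem_univ i))
  exact sub_eq_zero.mp this
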